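/- Let ψ be the Laplace transform of a positive random variable, and define the Archimedean copula C_ψ(u_1,...,u_d) = ψ(ψ^{-1}(u_1) + ... + ψ^{-1}(u_d)). Suppose as s → ∞, ψ(s) ~ a_1 s^q exp{-a_2 s^{1-β}} with a_1, a_2 > 0, 0 < β < 1, and ψ'(s) ~ T'(s) where T(s) = a_1 s^q exp{-a_2 s^{1-β}}. Then lim_{u→0+} log C_ψ(u,...,u)/log u = d^{1-β}; i.e., the lower tail order of C_ψ is d^{1-β}, strictly between 1 and d. -/

import Mathlib

open Filter Topology Real MeasureTheory

lemma auxLogPsi (ψ : ℝ → ℝ) (a₁ a₂ q r : ℝ) (ha₁ : 0 < a₁) (hr : 0 < r)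
    (hsim : Tendsto (fun s : ℝ => ψ s / (a₁ * s ^ q * Real.exp (-a₂ * s ^ r)))
      atTop (𝓝 1)) :
    (∀ᶠ s in atTop, 0 < ψ s) ∧
    Tendsto (fun s : ℝ => Real.log (ψ s) / s ^ r) atTop (𝓝 (-a₂)) := by
  have hgpos : ∀ s : ℝ, 0 < s → 0 < a₁ * s ^ q * Real.exp (-a₂ * s ^ r) := by
    intro s hs
    have h1 := Real.rpow_pos_of_pos hs q
    positivity
  have hhalf : ∀ᶠ s in atTop,
      (1:ℝ)/2 < ψ s / (a₁ * s ^ q * Real.exp (-a₂ * s ^ r)) := by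
    apply hsim.eventually
    exact eventually_gt_nhds (by norm_num)
  have hψpos : ∀ᶠ s in atTop, 0 < ψ s := by
    filter_upwards [hhalf, eventually_gt_atTop 0] with s h1 h2
    have hgp := hgpos s h2
    by_contra h
    push_neg at h
    have : ψ s / (a₁ * s ^ q * Real.exp (-a₂ * s ^ r)) ≤ 0 :=
      div_nonpos_iff.mpr (Or.inr ⟨h, hgp.le⟩)
    linarith
  refine ⟨hψpos, ?_⟩
  have heq : (fun s : ℝ => Real.log (ψ s / (a₁ * s ^ q * Real.exp (-a₂ * s ^ r))) / s ^ r
        + (Real.log a₁ / s ^ r + (q * (Real.log s / s ^ r) + -a₂)))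
      =ᶠ[atTop] fun s => Real.log (ψ s) / s ^ r := by
    filter_upwards [hψpos, eventually_gt_atTop 0] with s hψs hs
    have hgp := hgpos s hs
    have hsr : (0:ℝ) < s ^ r := Real.rpow_pos_of_pos hs r
    have hlog : Real.log (ψ s / (a₁ * s ^ q * Real.exp (-a₂ * s ^ r)))
        = Real.log (ψ s) - Real.log (a₁ * s ^ q * Real.exp (-a₂ * s ^ r)) :=
      Real.log_div hψs.ne' hgp.ne'
    have hlogg : Real.log (a₁ * s ^ q * Real.exp (-a₂ * s ^ r))
        = Real.log a₁ + q * Real.log s + (-a₂ * s ^ r) := by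
      rw [Real.log_mul (mul_pos ha₁ (Real.rpow_pos_of_pos hs q)).ne' (Real.exp_pos _).ne',
        Real.log_mul ha₁.ne' (Real.rpow_pos_of_pos hs q).ne', Real.log_rpow hs,
        Real.log_exp]
    rw [hlog, hlogg]
    field_simp
    ring
  have hl1 : Tendsto (fun s : ℝ =>
      Real.log (ψ s / (a₁ * s ^ q * Real.exp (-a₂ * s ^ r))) / s ^ r) atTop (𝓝 0) := by
    have ha : Tendsto (fun s : ℝ =>
        Real.log (ψ s / (a₁ * s ^ q * Real.exp (-a₂ * s ^ r)))) atTop (𝓝 0) := by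
      have hc := (Real.continuousAt_log one_ne_zero).tendsto.comp hsim
      simpa [Function.comp_def] using hc
    exact ha.div_atTop (tendsto_rpow_atTop hr)
  have hl2 : Tendsto (fun s : ℝ => Real.log a₁ / s ^ r) atTop (𝓝 0) :=
    tendsto_const_nhds.div_atTop (tendsto_rpow_atTop hr)
  have hl3 : Tendsto (fun s : ℝ => Real.log s / s ^ r) atTop (𝓝 0) :=
    (isLittleO_log_rpow_atTop hr).tendsto_div_nhds_zero
  have final := hl1.add (hl2.add ((hl3.const_mul q).add
    (tendsto_const_nhds : Tendsto (fun _ : ℝ => -a₂) atTop (𝓝 (-a₂)))))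
  have hval : (0:ℝ) + (0 + (q * 0 + -a₂)) = -a₂ := by ring
  rw [hval] at final
  exact Tendsto.congr' heq final

/-- if the Archimedean generator `ψ` (a Laplace transform of a positive
random variable) satisfies `ψ(s) ~ a₁ s^q exp(-a₂ s^{1-β})` and `ψ'(s) ~ T'(s)` as
`s → ∞`, with `0 < β < 1`, then the lower tail order of the Archimedean copula
`C_ψ(u1_d) = ψ(d ψ⁻¹(u))` is `d^{1-β}`, strictly between `1` and `d`. -/
theorem archimedean_lower_intermediate_tail {d : ℕ} (hd : 2 ≤ d)
    (ψ φ : ℝ → ℝ) (μ : Measure ℝ) [IsProbabilityMeasure μ]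
    (hμ : μ (Set.Iic 0) = 0)
    (hψLT : ∀ s : ℝ, 0 ≤ s → ψ s = ∫ x, Real.exp (-s * x) ∂μ)
    (hψ_anti : StrictAntiOn ψ (Set.Ici 0)) (hψ0 : ψ 0 = 1)
    (hψ_top : Tendsto ψ atTop (𝓝 0))
    (hφ : ∀ u : ℝ, u ∈ Set.Ioc (0:ℝ) 1 → 0 ≤ φ u ∧ ψ (φ u) = u)
    (a₁ a₂ q β : ℝ) (ha₁ : 0 < a₁) (ha₂ : 0 < a₂) (hβ : 0 < β ∧ β < 1)
    (hψ_sim : Tendsto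
      (fun s : ℝ => ψ s / (a₁ * s ^ q * Real.exp (-a₂ * s ^ (1 - β)))) atTop (𝓝 1))
    (hψ'_sim : Tendsto
      (fun s : ℝ => deriv ψ s /
        deriv (fun x : ℝ => a₁ * x ^ q * Real.exp (-a₂ * x ^ (1 - β))) s) atTop (𝓝 1)) :
    Tendsto (fun u : ℝ => Real.log (ψ ((d : ℝ) * φ u)) / Real.log u)
      (𝓝[>] (0:ℝ)) (𝓝 ((d : ℝ) ^ (1 - β))) ∧
    1 < (d : ℝ) ^ (1 - β) ∧ (d : ℝ) ^ (1 - β) < d := by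
  have hr : 0 < 1 - β := by linarith [hβ.2]
  have hd1 : (1:ℝ) < d := by exact_mod_cast Nat.lt_of_lt_of_le one_lt_two hd
  have hd0 : (0:ℝ) < d := lt_trans one_pos hd1
  obtain ⟨hψpos, hL⟩ := auxLogPsi ψ a₁ a₂ q (1 - β) ha₁ hr hψ_sim
  -- φ tends to atTop as u → 0+
  have hφtop : Tendsto φ (𝓝[>] (0:ℝ)) atTop := by
    rw [tendsto_atTop]
    intro M
    obtain ⟨s₀, hs₀ψ, hs₀M⟩ := (hψpos.and (eventually_ge_atTop (max M 0))).exists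
    have hs₀0 : (0:ℝ) ≤ s₀ := le_trans (le_max_right M 0) hs₀M
    have hmem : Set.Ioo (0:ℝ) (ψ s₀) ∈ 𝓝[>] (0:ℝ) :=
      Ioo_mem_nhdsGT_of_mem ⟨le_refl 0, hs₀ψ⟩
    filter_upwards [hmem] with u hu
    have hu1 : u ≤ 1 := by
      have : ψ s₀ ≤ ψ 0 := hψ_anti.antitoneOn (Set.self_mem_Ici) hs₀0 hs₀0
      rw [hψ0] at this
      exact le_of_lt (lt_of_lt_of_le hu.2 this)
    obtain ⟨hφ0, hφψ⟩ := hφ u ⟨hu.1, hu1⟩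
    by_contra hcon
    push_neg at hcon
    have hφs₀ : φ u ≤ s₀ := le_trans hcon.le (le_trans (le_max_left M 0) hs₀M)
    have : ψ s₀ ≤ ψ (φ u) := hψ_anti.antitoneOn hφ0 hs₀0 hφs₀
    rw [hφψ] at this
    exact absurd hu.2 (not_lt.mpr this)
  have hφtop' : Tendsto (fun u => (d:ℝ) * φ u) (𝓝[>] (0:ℝ)) atTop :=
    hφtop.const_mul_atTop hd0
  have h1 : Tendsto (fun u => Real.log (ψ (φ u)) / (φ u) ^ (1 - β))
      (𝓝[>] (0:ℝ)) (𝓝 (-a₂)) := hL.comp hφtop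
  have h2 : Tendsto (fun u => Real.log (ψ ((d:ℝ) * φ u)) / ((d:ℝ) * φ u) ^ (1 - β))
      (𝓝[>] (0:ℝ)) (𝓝 (-a₂)) := hL.comp hφtop'
  have hne : (-a₂ : ℝ) ≠ 0 := by linarith
  have hq := (h2.div h1 hne).mul_const ((d:ℝ) ^ (1 - β))
  rw [div_self hne, one_mul] at hq
  have hLne : ∀ᶠ u in 𝓝[>] (0:ℝ),
      Real.log (ψ (φ u)) / (φ u) ^ (1 - β) < -a₂ / 2 := by
    exact h1.eventually (eventually_lt_nhds (show (-a₂:ℝ) < -a₂/2 by linarith))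
  refine ⟨?_, ?_, ?_⟩
  · apply hq.congr'
    have hmem1 : Set.Ioo (0:ℝ) 1 ∈ 𝓝[>] (0:ℝ) :=
      Ioo_mem_nhdsGT_of_mem ⟨le_refl 0, one_pos⟩
    filter_upwards [hLne, hφtop.eventually (eventually_gt_atTop 0), hmem1] with u hLu hφu hu
    obtain ⟨hφ0, hφψ⟩ := hφ u ⟨hu.1, hu.2.le⟩
    have hrw : Real.log u = Real.log (ψ (φ u)) := by rw [hφψ]
    rw [hrw]
    have htr : (0:ℝ) < (φ u) ^ (1 - β) := Real.rpow_pos_of_pos hφu _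
    have hlψt : Real.log (ψ (φ u)) ≠ 0 := by
      intro h
      rw [h, zero_div] at hLu
      linarith
    have hdtr : ((d:ℝ) * φ u) ^ (1 - β) = (d:ℝ) ^ (1 - β) * (φ u) ^ (1 - β) :=
      Real.mul_rpow hd0.le hφu.le
    have hdr : (0:ℝ) < (d:ℝ) ^ (1 - β) := Real.rpow_pos_of_pos hd0 _
    simp only [Pi.div_apply]
    rw [hdtr]
    field_simp
  · nth_rewrite 1 [show (1:ℝ) = (d:ℝ) ^ (0:ℝ) by rw [Real.rpow_zero]]
    exact Real.rpow_lt_rpow_left_iff hd1 |>.mpr hr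
  · nth_rewrite 2 [show (d:ℝ) = (d:ℝ) ^ (1:ℝ) by rw [Real.rpow_one]]
    exact Real.rpow_lt_rpow_left_iff hd1 |>.mpr (by linarith [hβ.1])
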